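/- Entropy bounds sandwich: let ρ_RAB be a pure tripartite state with subsystems satisfying S(A_t) = s + (t−1)log 2 for some subsystem A_t of A of t qubits, S(A') = (|A|−t) log 2 for A' = A ∖ A_t with |A|−t ≤ t−1, S(B) = (2t−1−|A|) log 2 for B the complement of A among the shares, and S(R) = s. Then S(A) = s + (2t−1−|A|) log 2. -/

import Mathlib

open Matrix
open scoped ComplexOrder

noncomputable def negxlogx (x : ℝ) : ℝ := -(x * Real.log x)

/-- Von Neumann entropy of a matrix: `-∑ λᵢ log λᵢ` over the eigenvalues when the
matrix is Hermitian (and `0` otherwise, a junk value). -/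
noncomputable def vnEntropy {n : Type*} [Fintype n] [DecidableEq n] (ρ : Matrix n n ℂ) : ℝ :=
  if h : ρ.IsHermitian then ∑ i, negxlogx (h.eigenvalues i) else 0

section Tri
variable {r a b : Type*} [Fintype r] [Fintype a] [Fintype b]

/-- Reduced state on `R` of a tripartite state on `R ⊗ A ⊗ B`. -/
noncomputable def redR (ρ : Matrix (r × a × b) (r × a × b) ℂ) : Matrix r r ℂ :=
  Matrix.of fun i j => ∑ p : a × b, ρ (i, p) (j, p)

/-- Reduced state on `A`. -/
noncomputable def redA (ρ : Matrix (r × a × b) (r × a × b) ℂ) : Matrix a a ℂ :=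
  Matrix.of fun i j => ∑ k : r, ∑ l : b, ρ (k, i, l) (k, j, l)

/-- Reduced state on `B`. -/
noncomputable def redB (ρ : Matrix (r × a × b) (r × a × b) ℂ) : Matrix b b ℂ :=
  Matrix.of fun i j => ∑ k : r, ∑ p : a, ρ (k, p, i) (k, p, j)

/-- Reduced state on `A ⊗ B`. -/
noncomputable def redAB (ρ : Matrix (r × a × b) (r × a × b) ℂ) : Matrix (a × b) (a × b) ℂ :=
  Matrix.of fun p q => ∑ k : r, ρ (k, p) (k, q)

/-- Reduced state on `R ⊗ A`. -/
noncomputable def redRA (ρ : Matrix (r × a × b) (r × a × b) ℂ) : Matrix (r × a) (r × a) ℂ :=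
  Matrix.of fun x y => ∑ l : b, ρ (x.1, x.2, l) (y.1, y.2, l)

/-- Reduced state on `R ⊗ B`. -/
noncomputable def redRB (ρ : Matrix (r × a × b) (r × a × b) ℂ) : Matrix (r × b) (r × b) ℂ :=
  Matrix.of fun x y => ∑ p : a, ρ (x.1, p, x.2) (y.1, p, y.2)

end Tri

/-- Reduced state on the first half `A_t` of `A = A_t ⊗ A'`. -/
noncomputable def redAt {r at' a' b : Type*} [Fintype r] [Fintype at'] [Fintype a'] [Fintype b]
    (ρ : Matrix (r × (at' × a') × b) (r × (at' × a') × b) ℂ) : Matrix at' at' ℂ :=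
  Matrix.of fun i j => ∑ k : r, ∑ p : a', ∑ l : b, ρ (k, (i, p), l) (k, (j, p), l)

/-- Reduced state on the second half `A'` of `A = A_t ⊗ A'`. -/
noncomputable def redA' {r at' a' b : Type*} [Fintype r] [Fintype at'] [Fintype a'] [Fintype b]
    (ρ : Matrix (r × (at' × a') × b) (r × (at' × a') × b) ℂ) : Matrix a' a' ℂ :=
  Matrix.of fun i j => ∑ k : r, ∑ p : at', ∑ l : b, ρ (k, (p, i), l) (k, (p, j), l)


section EntropyAux
open Polynomial
set_option linter.unusedSectionVars false

section Charpoly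
variable {ι κ : Type*} [Fintype ι] [Fintype κ] [DecidableEq ι] [DecidableEq κ]

lemma my_eval_charpoly (N : Matrix ι ι ℂ) (x : ℂ) :
    N.charpoly.eval x = (x • (1 : Matrix ι ι ℂ) - N).det := by
  rw [Matrix.charpoly, ← Polynomial.coe_evalRingHom, RingHom.map_det]
  congr 1
  ext i j
  by_cases h : i = j
  · subst h; simp [charmatrix_apply_eq, Matrix.one_apply]
  · simp [charmatrix_apply_ne _ _ _ h, Matrix.one_apply, h]

lemma smul_one_sub_eq (y : ℂ) (hy : y ≠ 0) (A : Matrix ι κ ℂ) (B : Matrix κ ι ℂ) :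
    y • (1 : Matrix ι ι ℂ) - A * B = y • ((1 : Matrix ι ι ℂ) + ((-y⁻¹) • A) * B) := by
  rw [Matrix.smul_mul, smul_add, smul_smul]
  have : y * -y⁻¹ = -1 := by field_simp
  rw [this]
  simp [sub_eq_add_neg]

lemma rect_charpoly (A : Matrix ι κ ℂ) (B : Matrix κ ι ℂ) :
    (A * B).charpoly * X ^ Fintype.card κ = (B * A).charpoly * X ^ Fintype.card ι := by
  apply Polynomial.eq_of_infinite_eval_eq
  have hinf : ({x : ℂ | x ≠ 0}).Infinite :=
    Set.Finite.infinite_compl (Set.finite_singleton 0)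
  apply hinf.mono
  intro x hx
  simp only [Set.mem_setOf_eq] at hx ⊢
  simp only [eval_mul, eval_pow, eval_X, my_eval_charpoly]
  rw [smul_one_sub_eq x hx A B, smul_one_sub_eq x hx B A, Matrix.det_smul, Matrix.det_smul]
  have h1 : ((1 : Matrix ι ι ℂ) + (-x⁻¹) • A * B).det
      = ((1 : Matrix κ κ ℂ) + B * ((-x⁻¹) • A)).det := Matrix.det_one_add_mul_comm _ _
  have h2 : (1 : Matrix κ κ ℂ) + ((-x⁻¹) • B) * A = (1 : Matrix κ κ ℂ) + B * ((-x⁻¹) • A) := by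
    rw [Matrix.smul_mul, Matrix.mul_smul]
  rw [h1, h2]
  ring

lemma charpoly_transpose' (N : Matrix ι ι ℂ) : N.transpose.charpoly = N.charpoly := by
  unfold Matrix.charpoly
  rw [← Matrix.det_transpose (charmatrix N.transpose)]
  congr 1
  ext i j
  by_cases h : i = j
  · subst h; simp [charmatrix_apply_eq]
  · simp [Matrix.transpose_apply, charmatrix_apply_ne _ _ _ h,
      charmatrix_apply_ne _ _ _ (Ne.symm h)]

lemma charpoly_diagonal' (d : ι → ℂ) :
    (Matrix.diagonal d).charpoly = ∏ i, (X - C (d i)) := by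
  unfold Matrix.charpoly
  have : charmatrix (Matrix.diagonal d) = Matrix.diagonal (fun i => X - C (d i)) := by
    ext i j
    by_cases h : i = j
    · subst h; simp [charmatrix_apply_eq]
    · simp [charmatrix_apply_ne _ _ _ h, Matrix.diagonal_apply_ne _ h,
        Matrix.diagonal_apply_ne' _ h]
  rw [this, Matrix.det_diagonal]

lemma herm_charpoly {A : Matrix ι ι ℂ} (hA : A.IsHermitian) :
    A.charpoly = ∏ i, (X - C (hA.eigenvalues i : ℂ)) := by
  have hU := hA.spectral_theorem
  rw [Unitary.conjStarAlgAut_apply] at hU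
  set U : Matrix ι ι ℂ := (Matrix.IsHermitian.eigenvectorUnitary hA : Matrix ι ι ℂ) with hUdef
  have hkey := rect_charpoly (U * Matrix.diagonal (RCLike.ofReal ∘ hA.eigenvalues)) (star U)
  have hsu : star U * U * Matrix.diagonal (RCLike.ofReal ∘ hA.eigenvalues)
      = Matrix.diagonal (RCLike.ofReal ∘ hA.eigenvalues) := by
    rw [(Matrix.mem_unitaryGroup_iff').mp (Matrix.IsHermitian.eigenvectorUnitary hA).2, Matrix.one_mul]
  rw [← Matrix.mul_assoc, ← hU, hsu] at hkey
  have := mul_right_cancel₀ (pow_ne_zero (Fintype.card ι) Polynomial.X_ne_zero) hkey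
  rw [this, charpoly_diagonal']
  rfl

end Charpoly

section Charpoly2
variable {ι κ : Type*} [Fintype ι] [Fintype κ] [DecidableEq ι] [DecidableEq κ]
lemma charpoly_as_multiset {A : Matrix ι ι ℂ} (hA : A.IsHermitian) :
    A.charpoly = (((Finset.univ.val.map hA.eigenvalues).map
      (fun t : ℝ => (t : ℂ))).map (fun a => X - C a)).prod := by
  rw [herm_charpoly hA]
  rw [Finset.prod]
  rw [Multiset.map_map, Multiset.map_map]
  rfl

lemma roots_charpoly_mul_X_pow {A : Matrix ι ι ℂ} (hA : A.IsHermitian) (m : ℕ) :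
    (A.charpoly * X ^ m).roots
      = (Finset.univ.val.map hA.eigenvalues).map (fun t : ℝ => (t : ℂ))
        + Multiset.replicate m 0 := by
  rw [Polynomial.roots_mul (mul_ne_zero (A.charpoly_monic).ne_zero
    (pow_ne_zero _ Polynomial.X_ne_zero)), Polynomial.roots_pow, Polynomial.roots_X,
    charpoly_as_multiset hA, Polynomial.roots_multiset_prod_X_sub_C]
  congr 1
  exact Multiset.nsmul_singleton _ _

lemma entropy_sum_eq_of_charpoly {A : Matrix ι ι ℂ} {B : Matrix κ κ ℂ}
    (hA : A.IsHermitian) (hB : B.IsHermitian) {m n : ℕ}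
    (h : A.charpoly * X ^ m = B.charpoly * X ^ n) :
    ∑ i, negxlogx (hA.eigenvalues i) = ∑ j, negxlogx (hB.eigenvalues j) := by
  have hroots := congrArg Polynomial.roots h
  rw [roots_charpoly_mul_X_pow hA m, roots_charpoly_mul_X_pow hB n] at hroots
  have hre : ((Finset.univ.val.map hA.eigenvalues) + Multiset.replicate m (0:ℝ)).map
        (fun t : ℝ => (t : ℂ))
      = ((Finset.univ.val.map hB.eigenvalues) + Multiset.replicate n (0:ℝ)).map
        (fun t : ℝ => (t : ℂ)) := by
    rw [Multiset.map_add, Multiset.map_add]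
    simpa [Multiset.map_replicate] using hroots
  have hr : (Finset.univ.val.map hA.eigenvalues) + Multiset.replicate m (0:ℝ)
      = (Finset.univ.val.map hB.eigenvalues) + Multiset.replicate n (0:ℝ) :=
    Multiset.map_injective (fun a b => by exact_mod_cast id) hre
  have hsum := congrArg (fun s : Multiset ℝ => (s.map negxlogx).sum) hr
  simp only [Multiset.map_add, Multiset.sum_add, Multiset.map_replicate] at hsum
  have h0 : negxlogx 0 = 0 := by simp [negxlogx]
  rw [h0] at hsum
  simp only [Multiset.sum_replicate, smul_zero, add_zero] at hsum
  have eA : ∑ i, negxlogx (hA.eigenvalues i)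
      = (Multiset.map negxlogx (Multiset.map hA.eigenvalues Finset.univ.val)).sum := by
    rw [Multiset.map_map]; rfl
  have eB : ∑ j, negxlogx (hB.eigenvalues j)
      = (Multiset.map negxlogx (Multiset.map hB.eigenvalues Finset.univ.val)).sum := by
    rw [Multiset.map_map]; rfl
  rw [eA, eB]
  exact hsum

lemma vnEntropy_eq_of_charpoly {A : Matrix ι ι ℂ} {B : Matrix κ κ ℂ}
    (hA : A.IsHermitian) (hB : B.IsHermitian) {m n : ℕ}
    (h : A.charpoly * X ^ m = B.charpoly * X ^ n) :
    vnEntropy A = vnEntropy B := by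
  unfold vnEntropy
  rw [dif_pos hA, dif_pos hB]
  exact entropy_sum_eq_of_charpoly hA hB h

/-- Gram matrices are Hermitian. -/
lemma gram_isHermitian (φ : ι → κ → ℂ) :
    (Matrix.of fun i j => ∑ x, φ i x * (starRingEnd ℂ) (φ j x)).IsHermitian := by
  ext i j
  simp [Matrix.conjTranspose_apply, Finset.sum_comm, mul_comm]

lemma gram_posSemidef (φ : ι → κ → ℂ) :
    (Matrix.of fun i j => ∑ x, φ i x * (starRingEnd ℂ) (φ j x)).PosSemidef := by
  have hA : (Matrix.of fun i j => ∑ x, φ i x * (starRingEnd ℂ) (φ j x))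
      = (Matrix.of φ) * (Matrix.of φ).conjTranspose := by
    ext i j; simp [Matrix.mul_apply, Matrix.conjTranspose_apply]
  rw [hA]
  exact Matrix.posSemidef_self_mul_conjTranspose _

lemma vnEntropy_gram_comm (φ : ι → κ → ℂ) :
    vnEntropy (Matrix.of fun i j => ∑ x, φ i x * (starRingEnd ℂ) (φ j x))
      = vnEntropy (Matrix.of fun x y => ∑ i, φ i x * (starRingEnd ℂ) (φ i y)) := by
  set M : Matrix ι κ ℂ := Matrix.of φ with hM
  have hA : (Matrix.of fun i j => ∑ x, φ i x * (starRingEnd ℂ) (φ j x)) = M * M.conjTranspose := by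
    ext i j; simp [Matrix.mul_apply, Matrix.conjTranspose_apply, hM]
  have hB : (Matrix.of fun x y => ∑ i, φ i x * (starRingEnd ℂ) (φ i y))
      = (M.conjTranspose * M).transpose := by
    ext x y; simp [Matrix.mul_apply, Matrix.conjTranspose_apply, hM, mul_comm]
  rw [hA, hB]
  refine vnEntropy_eq_of_charpoly (m := Fintype.card κ) (n := Fintype.card ι)
    (Matrix.isHermitian_mul_conjTranspose_self M)
    ((Matrix.isHermitian_conjTranspose_mul_self M).transpose) ?_
  rw [charpoly_transpose']
  exact rect_charpoly M M.conjTranspose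

end Charpoly2

section Klein

lemma klein_term {l c p q : ℝ} (hl : 0 ≤ l) (hc : 0 ≤ c) (hp : 0 ≤ p) (hq : 0 ≤ q)
    (hz : p = 0 ∨ q = 0 → l * c = 0) :
    l * c - c * (p * q) ≤ l * c * Real.log l - l * c * Real.log p - l * c * Real.log q := by
  rcases eq_or_ne (l * c) 0 with h0 | h0
  · rw [h0, zero_mul, zero_mul, zero_mul]
    have : 0 ≤ c * (p * q) := mul_nonneg hc (mul_nonneg hp hq)
    linarith
  · have hl' : 0 < l := (mul_ne_zero_iff.mp h0).1.lt_of_le' hl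
    have hc' : 0 < c := (mul_ne_zero_iff.mp h0).2.lt_of_le' hc
    have hp' : 0 < p := by
      rcases eq_or_lt_of_le hp with h | h
      · exact absurd (hz (Or.inl h.symm)) h0
      · exact h
    have hq' : 0 < q := by
      rcases eq_or_lt_of_le hq with h | h
      · exact absurd (hz (Or.inr h.symm)) h0
      · exact h
    have hlog := Real.log_le_sub_one_of_pos (show (0:ℝ) < p * q / l by positivity)
    rw [Real.log_div (by positivity) (ne_of_gt hl'),
      Real.log_mul (ne_of_gt hp') (ne_of_gt hq')] at hlog
    have h2 := mul_le_mul_of_nonneg_left hlog (le_of_lt (mul_pos hl' hc'))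
    have hfield : l * c * (p * q / l - 1) = c * (p * q) - l * c := by
      field_simp
    nlinarith [h2]

end Klein

section Unitary
variable {n : Type*} [Fintype n] [DecidableEq n]

lemma unitary_col_sum (U : Matrix.unitaryGroup n ℂ) (i i' : n) :
    ∑ z, (starRingEnd ℂ) ((U : Matrix n n ℂ) z i) * (U : Matrix n n ℂ) z i'
      = if i = i' then 1 else 0 := by
  have h : star (U : Matrix n n ℂ) * U = 1 := Matrix.mem_unitaryGroup_iff'.mp U.2
  have h2 : (star (U : Matrix n n ℂ) * (U : Matrix n n ℂ)) i i' = (1 : Matrix n n ℂ) i i' := by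
    rw [h]
  simpa [Matrix.mul_apply, Matrix.star_apply, Matrix.one_apply, RCLike.star_def] using h2

lemma unitary_row_sum (U : Matrix.unitaryGroup n ℂ) (z z' : n) :
    ∑ i, (U : Matrix n n ℂ) z i * (starRingEnd ℂ) ((U : Matrix n n ℂ) z' i)
      = if z = z' then 1 else 0 := by
  have h : (U : Matrix n n ℂ) * star (U : Matrix n n ℂ) = 1 := Matrix.mem_unitaryGroup_iff.mp U.2
  have h2 : ((U : Matrix n n ℂ) * star (U : Matrix n n ℂ)) z z' = (1 : Matrix n n ℂ) z z' := by
    rw [h]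
  simpa [Matrix.mul_apply, Matrix.star_apply, Matrix.one_apply, RCLike.star_def] using h2

lemma spectral_entry {A : Matrix n n ℂ} (hA : A.IsHermitian) (z z' : n) :
    A z z' = ∑ i, (hA.eigenvalues i : ℂ)
      * ((hA.eigenvectorUnitary : Matrix n n ℂ) z i
        * (starRingEnd ℂ) ((hA.eigenvectorUnitary : Matrix n n ℂ) z' i)) := by
  conv_lhs => rw [hA.spectral_theorem, Unitary.conjStarAlgAut_apply]
  simp only [Matrix.mul_apply, Matrix.diagonal_apply, Matrix.star_apply, RCLike.star_def,
    Function.comp_apply, ite_mul, zero_mul, mul_ite, mul_zero, Finset.sum_ite_eq,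
    Finset.sum_ite_eq', Finset.mem_univ, if_true]
  simp only [show (RCLike.ofReal : ℝ → ℂ) = Complex.ofReal from rfl]
  congr 1
  funext i
  ring

lemma sum_eigenvalues_eq_one {A : Matrix n n ℂ} (hA : A.IsHermitian) (htr : A.trace = 1) :
    ∑ i, hA.eigenvalues i = 1 := by
  have h : ((∑ i, hA.eigenvalues i : ℝ) : ℂ) = 1 := by
    push_cast
    calc (∑ i, (hA.eigenvalues i : ℂ))
        = ∑ i, (hA.eigenvalues i : ℂ) * ∑ z, (starRingEnd ℂ)
            ((hA.eigenvectorUnitary : Matrix n n ℂ) z i)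
            * (hA.eigenvectorUnitary : Matrix n n ℂ) z i := by
          congr 1; funext i
          rw [unitary_col_sum hA.eigenvectorUnitary i i, if_pos rfl, mul_one]
      _ = ∑ z, ∑ i, (hA.eigenvalues i : ℂ)
            * ((hA.eigenvectorUnitary : Matrix n n ℂ) z i
              * (starRingEnd ℂ) ((hA.eigenvectorUnitary : Matrix n n ℂ) z i)) := by
          rw [Finset.sum_comm]
          congr 1; funext i
          rw [Finset.mul_sum]
          congr 1; funext z
          ring
      _ = ∑ z, A z z := by
          congr 1; funext z
          rw [← spectral_entry hA z z]
      _ = A.trace := rfl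
      _ = 1 := htr
  exact_mod_cast h

end Unitary

section Subadd
variable {α β : Type*} [Fintype α] [Fintype β] [DecidableEq α] [DecidableEq β]

lemma marg_fst_posSemidef {τ : Matrix (α × β) (α × β) ℂ} (hτ : τ.PosSemidef) :
    (Matrix.of fun a a' => ∑ b, τ (a, b) (a', b)).PosSemidef := by
  have h : (Matrix.of fun a a' => ∑ b, τ (a, b) (a', b))
      = ∑ b : β, τ.submatrix (fun a => (a, b)) (fun a => (a, b)) := by
    ext a a'
    simp [Matrix.sum_apply]
  rw [h]
  exact Finset.sum_induction _ _ (fun x y hx hy => hx.add hy) Matrix.PosSemidef.zero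
    (fun b _ => hτ.submatrix _)

lemma marg_snd_posSemidef {τ : Matrix (α × β) (α × β) ℂ} (hτ : τ.PosSemidef) :
    (Matrix.of fun b b' => ∑ a, τ (a, b) (a, b')).PosSemidef := by
  have h : (Matrix.of fun b b' => ∑ a, τ (a, b) (a, b'))
      = ∑ a : α, τ.submatrix (fun b => (a, b)) (fun b => (a, b)) := by
    ext b b'
    simp [Matrix.sum_apply]
  rw [h]
  exact Finset.sum_induction _ _ (fun x y hx hy => hx.add hy) Matrix.PosSemidef.zero
    (fun a _ => hτ.submatrix _)

end Subadd

section Diag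
variable {n : Type*} [Fintype n] [DecidableEq n]

set_option linter.unusedSectionVars false

lemma sum_swap3 {M : Type*} [AddCommMonoid M] {γ : Type*} [Fintype γ] {δ : Type*} [Fintype δ]
    {ε : Type*} [Fintype ε] (f : γ → δ → ε → M) :
    ∑ x, ∑ x', ∑ a', f x x' a' = ∑ a', ∑ x, ∑ x', f x x' a' :=
  calc ∑ x, ∑ x', ∑ a', f x x' a' = ∑ x, ∑ a', ∑ x', f x x' a' := by
        refine Finset.sum_congr rfl fun x _ => ?_
        exact Finset.sum_comm
    _ = ∑ a', ∑ x, ∑ x', f x x' a' := Finset.sum_comm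

lemma diag_entry {A : Matrix n n ℂ} (hA : A.IsHermitian) (a : n) :
    ∑ x, ∑ x', (starRingEnd ℂ) ((hA.eigenvectorUnitary : Matrix n n ℂ) x a) * A x x'
      * (hA.eigenvectorUnitary : Matrix n n ℂ) x' a = (hA.eigenvalues a : ℂ) := by
  calc ∑ x, ∑ x', (starRingEnd ℂ) ((hA.eigenvectorUnitary : Matrix n n ℂ) x a) * A x x'
      * (hA.eigenvectorUnitary : Matrix n n ℂ) x' a
      = ∑ a', (hA.eigenvalues a' : ℂ) *
          ((∑ x, (starRingEnd ℂ) ((hA.eigenvectorUnitary : Matrix n n ℂ) x a)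
            * (hA.eigenvectorUnitary : Matrix n n ℂ) x a') *
           (∑ x', (starRingEnd ℂ) ((hA.eigenvectorUnitary : Matrix n n ℂ) x' a')
            * (hA.eigenvectorUnitary : Matrix n n ℂ) x' a)) := by
        simp_rw [spectral_entry hA, Finset.mul_sum, Finset.sum_mul]
        rw [sum_swap3]
        simp_rw [Finset.mul_sum]
        refine Finset.sum_congr rfl fun a' _ => ?_
        rw [Finset.sum_comm]
        refine Finset.sum_congr rfl fun x _ => ?_
        refine Finset.sum_congr rfl fun x' _ => ?_
        ring
    _ = (hA.eigenvalues a : ℂ) := by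
        rw [Fintype.sum_eq_single a]
        · rw [unitary_col_sum hA.eigenvectorUnitary a a, if_pos rfl]
          ring
        · intro a' ha'
          rw [unitary_col_sum hA.eigenvectorUnitary a a', if_neg (by exact fun h => ha' h.symm)]
          ring

end Diag

section KleinSum

lemma klein_sum {α β γ : Type*} [Fintype α] [Fintype β] [Fintype γ]
    (lam : γ → ℝ) (p : α → ℝ) (q : β → ℝ) (c : α → β → γ → ℝ)
    (hlam : ∀ i, 0 ≤ lam i) (hp : ∀ a, 0 ≤ p a) (hq : ∀ b, 0 ≤ q b)
    (hc : ∀ a b i, 0 ≤ c a b i)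
    (hc1 : ∀ a b, ∑ i, c a b i = 1)
    (hc2 : ∀ i, ∑ a, ∑ b, c a b i = 1)
    (hrp : ∀ a, ∑ b, ∑ i, lam i * c a b i = p a)
    (hrq : ∀ b, ∑ a, ∑ i, lam i * c a b i = q b)
    (hp1 : ∑ a, p a = 1) (hq1 : ∑ b, q b = 1) :
    ∑ i, negxlogx (lam i) ≤ ∑ a, negxlogx (p a) + ∑ b, negxlogx (q b) := by
  have hzp : ∀ a, p a = 0 → ∀ b i, lam i * c a b i = 0 := by
    intro a ha b i
    have h0 : ∑ b', ∑ i', lam i' * c a b' i' = 0 := by rw [hrp a, ha]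
    have hnn : ∀ b' ∈ Finset.univ, (0:ℝ) ≤ ∑ i', lam i' * c a b' i' :=
      fun b' _ => Finset.sum_nonneg fun i' _ => mul_nonneg (hlam i') (hc a b' i')
    have hb0 := (Finset.sum_eq_zero_iff_of_nonneg hnn).mp h0 b (Finset.mem_univ b)
    exact (Finset.sum_eq_zero_iff_of_nonneg
      (fun i' _ => mul_nonneg (hlam i') (hc a b i'))).mp hb0 i (Finset.mem_univ i)
  have hzq : ∀ b, q b = 0 → ∀ a i, lam i * c a b i = 0 := by
    intro b hb a i
    have h0 : ∑ a', ∑ i', lam i' * c a' b i' = 0 := by rw [hrq b, hb]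
    have hnn : ∀ a' ∈ Finset.univ, (0:ℝ) ≤ ∑ i', lam i' * c a' b i' :=
      fun a' _ => Finset.sum_nonneg fun i' _ => mul_nonneg (hlam i') (hc a' b i')
    have ha0 := (Finset.sum_eq_zero_iff_of_nonneg hnn).mp h0 a (Finset.mem_univ a)
    exact (Finset.sum_eq_zero_iff_of_nonneg
      (fun i' _ => mul_nonneg (hlam i') (hc a b i'))).mp ha0 i (Finset.mem_univ i)
  have main : ∑ a, ∑ b, ∑ i, (lam i * c a b i - c a b i * (p a * q b))
      ≤ ∑ a, ∑ b, ∑ i, (lam i * c a b i * Real.log (lam i)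
          - lam i * c a b i * Real.log (p a) - lam i * c a b i * Real.log (q b)) := by
    refine Finset.sum_le_sum fun a _ => Finset.sum_le_sum fun b _ => Finset.sum_le_sum
      fun i _ => ?_
    exact klein_term (hlam i) (hc a b i) (hp a) (hq b)
      (by rintro (h | h); exacts [hzp a h b i, hzq b h a i])
  have h1 : ∑ a, ∑ b, ∑ i, lam i * c a b i = 1 := by
    rw [← hp1]; exact Finset.sum_congr rfl fun a _ => hrp a
  have h2 : ∑ a, ∑ b, ∑ i, c a b i * (p a * q b) = 1 := by
    have hin : ∀ a b, ∑ i, c a b i * (p a * q b) = p a * q b := by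
      intro a b; rw [← Finset.sum_mul, hc1 a b, one_mul]
    calc ∑ a, ∑ b, ∑ i, c a b i * (p a * q b) = ∑ a, ∑ b, p a * q b :=
          Finset.sum_congr rfl fun a _ => Finset.sum_congr rfl fun b _ => hin a b
      _ = (∑ a, p a) * (∑ b, q b) := by rw [Finset.sum_mul_sum]
      _ = 1 := by rw [hp1, hq1, one_mul]
  have hT : ∑ a, ∑ b, ∑ i, lam i * c a b i * Real.log (lam i)
      = ∑ i, lam i * Real.log (lam i) := by
    rw [sum_swap3]
    refine Finset.sum_congr rfl fun i _ => ?_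
    have : ∑ a, ∑ b, lam i * c a b i * Real.log (lam i)
        = (∑ a, ∑ b, c a b i) * (lam i * Real.log (lam i)) := by
      rw [Finset.sum_mul]
      refine Finset.sum_congr rfl fun a _ => ?_
      rw [Finset.sum_mul]
      refine Finset.sum_congr rfl fun b _ => ?_
      ring
    rw [this, hc2 i, one_mul]
  have hP : ∑ a, ∑ b, ∑ i, lam i * c a b i * Real.log (p a)
      = ∑ a, p a * Real.log (p a) := by
    refine Finset.sum_congr rfl fun a _ => ?_
    calc ∑ b, ∑ i, lam i * c a b i * Real.log (p a)
        = (∑ b, ∑ i, lam i * c a b i) * Real.log (p a) := by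
          rw [Finset.sum_mul]
          refine Finset.sum_congr rfl fun b _ => ?_
          rw [Finset.sum_mul]
      _ = p a * Real.log (p a) := by rw [hrp a]
  have hQ : ∑ a, ∑ b, ∑ i, lam i * c a b i * Real.log (q b)
      = ∑ b, q b * Real.log (q b) := by
    rw [Finset.sum_comm]
    refine Finset.sum_congr rfl fun b _ => ?_
    calc ∑ a, ∑ i, lam i * c a b i * Real.log (q b)
        = (∑ a, ∑ i, lam i * c a b i) * Real.log (q b) := by
          rw [Finset.sum_mul]
          refine Finset.sum_congr rfl fun a _ => ?_
          rw [Finset.sum_mul]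
      _ = q b * Real.log (q b) := by rw [hrq b]
  simp only [Finset.sum_sub_distrib] at main
  rw [h1, h2, hT, hP, hQ] at main
  simp only [negxlogx, Finset.sum_neg_distrib]
  linarith

end KleinSum

section SubaddMain
variable {α β : Type*} [Fintype α] [Fintype β] [DecidableEq α] [DecidableEq β]

lemma subadditivity (τ : Matrix (α × β) (α × β) ℂ) (hτ : τ.PosSemidef) (htr : τ.trace = 1) :
    vnEntropy τ ≤ vnEntropy (Matrix.of fun a a' => ∑ b, τ (a, b) (a', b))
      + vnEntropy (Matrix.of fun b b' => ∑ a, τ (a, b) (a, b')) := by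
  classical
  have hH : τ.IsHermitian := hτ.1
  have hA1 : (Matrix.of fun a a' => ∑ b, τ (a, b) (a', b)).PosSemidef := marg_fst_posSemidef hτ
  have hB1 : (Matrix.of fun b b' => ∑ a, τ (a, b) (a, b')).PosSemidef := marg_snd_posSemidef hτ
  set A1 : Matrix α α ℂ := Matrix.of fun a a' => ∑ b, τ (a, b) (a', b)
  set B1 : Matrix β β ℂ := Matrix.of fun b b' => ∑ a, τ (a, b) (a, b')
  set lam : (α × β) → ℝ := hH.eigenvalues with hlamdef
  set U : Matrix (α × β) (α × β) ℂ := (hH.eigenvectorUnitary : Matrix (α × β) (α × β) ℂ)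
    with hUdef
  set p : α → ℝ := hA1.1.eigenvalues with hpdef
  set V : Matrix α α ℂ := (hA1.1.eigenvectorUnitary : Matrix α α ℂ) with hVdef
  set q : β → ℝ := hB1.1.eigenvalues with hqdef
  set W : Matrix β β ℂ := (hB1.1.eigenvectorUnitary : Matrix β β ℂ) with hWdef
  -- the product basis vectors and overlap coefficients
  set wv : (α × β) → (α × β) → ℂ := fun j z => V z.1 j.1 * W z.2 j.2 with hwvdef
  set d : (α × β) → (α × β) → ℂ := fun j i => ∑ z, (starRingEnd ℂ) (wv j z) * U z i with hddef
  set c : (α × β) → (α × β) → ℝ := fun j i => Complex.normSq (d j i) with hcdef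
  -- orthonormality facts
  have hVcol : ∀ a a', ∑ x, (starRingEnd ℂ) (V x a) * V x a' = if a = a' then 1 else 0 :=
    fun a a' => unitary_col_sum hA1.1.eigenvectorUnitary a a'
  have hWcol : ∀ b b', ∑ y, (starRingEnd ℂ) (W y b) * W y b' = if b = b' then 1 else 0 :=
    fun b b' => unitary_col_sum hB1.1.eigenvectorUnitary b b'
  have hWrow : ∀ y y', ∑ b, (starRingEnd ℂ) (W y b) * W y' b = if y = y' then 1 else 0 := by
    intro y y'
    have h := congrArg (starRingEnd ℂ) (unitary_row_sum hB1.1.eigenvectorUnitary y y')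
    simpa [map_sum, apply_ite, hWdef] using h
  have hVrow : ∀ x x', ∑ a, (starRingEnd ℂ) (V x a) * V x' a = if x = x' then 1 else 0 := by
    intro x x'
    have h := congrArg (starRingEnd ℂ) (unitary_row_sum hA1.1.eigenvectorUnitary x x')
    simpa [map_sum, apply_ite, hVdef] using h
  have hUrow : ∀ z z', ∑ i, U z i * (starRingEnd ℂ) (U z' i) = if z = z' then 1 else 0 :=
    fun z z' => unitary_row_sum hH.eigenvectorUnitary z z'
  have hUcol : ∀ i i', ∑ z, (starRingEnd ℂ) (U z i) * U z i' = if i = i' then 1 else 0 :=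
    fun i i' => unitary_col_sum hH.eigenvectorUnitary i i'
  -- orthonormality of the product family
  have ho1 : ∀ j j' : α × β, ∑ z : α × β, (starRingEnd ℂ) (wv j z) * wv j' z
      = if j = j' then 1 else 0 := by
    intro j j'
    rw [Fintype.sum_prod_type]
    have hterm : ∀ x y, (starRingEnd ℂ) (wv j (x, y)) * wv j' (x, y)
        = ((starRingEnd ℂ) (V x j.1) * V x j'.1) * ((starRingEnd ℂ) (W y j.2) * W y j'.2) := by
      intro x y
      simp only [hwvdef, _root_.map_mul]
      ring
    simp_rw [hterm]
    rw [← Finset.sum_mul_sum, hVcol j.1 j'.1, hWcol j.2 j'.2]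
    by_cases h1 : j.1 = j'.1 <;> by_cases h2 : j.2 = j'.2 <;>
      simp [h1, h2, Prod.ext_iff]
  have ho2 : ∀ z z' : α × β, ∑ j : α × β, wv j z * (starRingEnd ℂ) (wv j z')
      = if z = z' then 1 else 0 := by
    intro z z'
    rw [Fintype.sum_prod_type]
    have hterm : ∀ a b, wv (a, b) z * (starRingEnd ℂ) (wv (a, b) z')
        = (V z.1 a * (starRingEnd ℂ) (V z'.1 a)) * (W z.2 b * (starRingEnd ℂ) (W z'.2 b)) := by
      intro a b
      simp only [hwvdef, _root_.map_mul]
      ring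
    simp_rw [hterm]
    rw [← Finset.sum_mul_sum]
    have hV := unitary_row_sum hA1.1.eigenvectorUnitary z.1 z'.1
    have hW := unitary_row_sum hB1.1.eigenvectorUnitary z.2 z'.2
    rw [← hVdef] at hV
    rw [← hWdef] at hW
    rw [hV, hW]
    by_cases h1 : z.1 = z'.1 <;> by_cases h2 : z.2 = z'.2 <;>
      simp [h1, h2, Prod.ext_iff]
  -- expansion of d * conj d
  have hexp : ∀ j i, d j i * (starRingEnd ℂ) (d j i)
      = ∑ z, ∑ z', ((starRingEnd ℂ) (wv j z) * U z i) * (wv j z' * (starRingEnd ℂ) (U z' i)) := by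
    intro j i
    rw [hddef]
    simp only []
    rw [map_sum, Finset.sum_mul_sum]
    refine Finset.sum_congr rfl fun z _ => Finset.sum_congr rfl fun z' _ => ?_
    simp only [_root_.map_mul, Complex.conj_conj]
    try ring
  have hterm : ∀ j i, ((c j i : ℝ) : ℂ) = d j i * (starRingEnd ℂ) (d j i) := by
    intro j i
    have h1 : c j i = Complex.normSq (d j i) := rfl
    rw [h1, ← Complex.mul_conj]
  -- ∑ i, c j i = 1
  have hdd : ∀ j : α × β, ∑ i : α × β, ((c j i : ℝ) : ℂ) = 1 := by
    intro j
    calc ∑ i : α × β, ((c j i : ℝ) : ℂ)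
        = ∑ i : α × β, ∑ z, ∑ z', ((starRingEnd ℂ) (wv j z) * U z i)
            * (wv j z' * (starRingEnd ℂ) (U z' i)) := by
          refine Finset.sum_congr rfl fun i _ => ?_
          rw [hterm j i, hexp j i]
      _ = ∑ z, ∑ z', ∑ i : α × β, ((starRingEnd ℂ) (wv j z) * U z i)
            * (wv j z' * (starRingEnd ℂ) (U z' i)) := (sum_swap3 _).symm
      _ = ∑ z, ∑ z', ((starRingEnd ℂ) (wv j z) * wv j z')
            * ∑ i, U z i * (starRingEnd ℂ) (U z' i) := by
          refine Finset.sum_congr rfl fun z _ => Finset.sum_congr rfl fun z' _ => ?_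
          rw [Finset.mul_sum]
          refine Finset.sum_congr rfl fun i _ => ?_
          ring
      _ = ∑ z, ∑ z', ((starRingEnd ℂ) (wv j z) * wv j z') * (if z = z' then 1 else 0) := by
          refine Finset.sum_congr rfl fun z _ => Finset.sum_congr rfl fun z' _ => ?_
          rw [hUrow z z']
      _ = ∑ z, (starRingEnd ℂ) (wv j z) * wv j z := by
          refine Finset.sum_congr rfl fun z _ => ?_
          simp [mul_ite, mul_one, mul_zero, Finset.sum_ite_eq]
      _ = 1 := by rw [ho1 j j, if_pos rfl]
  -- ∑ j, c j i = 1
  have hcc : ∀ i : α × β, ∑ j : α × β, ((c j i : ℝ) : ℂ) = 1 := by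
    intro i
    calc ∑ j : α × β, ((c j i : ℝ) : ℂ)
        = ∑ j : α × β, ∑ z, ∑ z', ((starRingEnd ℂ) (wv j z) * U z i)
            * (wv j z' * (starRingEnd ℂ) (U z' i)) := by
          refine Finset.sum_congr rfl fun j _ => ?_
          rw [hterm j i, hexp j i]
      _ = ∑ z, ∑ z', ∑ j : α × β, ((starRingEnd ℂ) (wv j z) * U z i)
            * (wv j z' * (starRingEnd ℂ) (U z' i)) := (sum_swap3 _).symm
      _ = ∑ z, ∑ z', (U z i * (starRingEnd ℂ) (U z' i))
            * ∑ j, wv j z' * (starRingEnd ℂ) (wv j z) := by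
          refine Finset.sum_congr rfl fun z _ => Finset.sum_congr rfl fun z' _ => ?_
          rw [Finset.mul_sum]
          refine Finset.sum_congr rfl fun j _ => ?_
          ring
      _ = ∑ z, ∑ z', (U z i * (starRingEnd ℂ) (U z' i)) * (if z' = z then 1 else 0) := by
          refine Finset.sum_congr rfl fun z _ => Finset.sum_congr rfl fun z' _ => ?_
          rw [ho2 z' z]
      _ = ∑ z, U z i * (starRingEnd ℂ) (U z i) := by
          refine Finset.sum_congr rfl fun z _ => ?_
          simp [mul_ite, mul_one, mul_zero, Finset.sum_ite_eq']
      _ = ∑ z, (starRingEnd ℂ) (U z i) * U z i := by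
          refine Finset.sum_congr rfl fun z _ => ?_
          ring
      _ = 1 := by rw [hUcol i i, if_pos rfl]
  -- quadratic form expansion
  have hrC : ∀ j : α × β, ∑ z, ∑ z', (starRingEnd ℂ) (wv j z) * τ z z' * wv j z'
      = ∑ i, ((lam i : ℝ) : ℂ) * ((c j i : ℝ) : ℂ) := by
    intro j
    calc ∑ z, ∑ z', (starRingEnd ℂ) (wv j z) * τ z z' * wv j z'
        = ∑ z, ∑ z', ∑ i, ((lam i : ℝ) : ℂ)
            * (((starRingEnd ℂ) (wv j z) * U z i) * (wv j z' * (starRingEnd ℂ) (U z' i))) := by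
          refine Finset.sum_congr rfl fun z _ => Finset.sum_congr rfl fun z' _ => ?_
          rw [spectral_entry hH z z', ← hUdef, Finset.mul_sum, Finset.sum_mul]
          refine Finset.sum_congr rfl fun i _ => ?_
          ring
      _ = ∑ i, ∑ z, ∑ z', ((lam i : ℝ) : ℂ)
            * (((starRingEnd ℂ) (wv j z) * U z i) * (wv j z' * (starRingEnd ℂ) (U z' i))) :=
          sum_swap3 _
      _ = ∑ i, ((lam i : ℝ) : ℂ) * ((c j i : ℝ) : ℂ) := by
          refine Finset.sum_congr rfl fun i _ => ?_
          rw [hterm j i, hexp j i, Finset.mul_sum]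
          refine Finset.sum_congr rfl fun z _ => ?_
          rw [Finset.mul_sum]
  -- marginal A
  have hm1 : ∀ a, ∑ b, ∑ z, ∑ z', (starRingEnd ℂ) (wv (a, b) z) * τ z z' * wv (a, b) z'
      = ((p a : ℝ) : ℂ) := by
    intro a
    calc ∑ b, ∑ z, ∑ z', (starRingEnd ℂ) (wv (a, b) z) * τ z z' * wv (a, b) z'
        = ∑ z, ∑ z', ∑ b, (starRingEnd ℂ) (wv (a, b) z) * τ z z' * wv (a, b) z' :=
          (sum_swap3 _).symm
      _ = ∑ z, ∑ z', ((starRingEnd ℂ) (V z.1 a) * τ z z' * V z'.1 a)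
            * ∑ b, (starRingEnd ℂ) (W z.2 b) * W z'.2 b := by
          refine Finset.sum_congr rfl fun z _ => Finset.sum_congr rfl fun z' _ => ?_
          rw [Finset.mul_sum]
          refine Finset.sum_congr rfl fun b _ => ?_
          simp only [hwvdef, _root_.map_mul]
          ring
      _ = ∑ z, ∑ z', ((starRingEnd ℂ) (V z.1 a) * τ z z' * V z'.1 a)
            * (if z.2 = z'.2 then 1 else 0) := by
          refine Finset.sum_congr rfl fun z _ => Finset.sum_congr rfl fun z' _ => ?_
          rw [hWrow z.2 z'.2]
      _ = ∑ x, ∑ x', (starRingEnd ℂ) (V x a) * A1 x x' * V x' a := by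
          rw [Fintype.sum_prod_type]
          refine Finset.sum_congr rfl fun x _ => ?_
          calc ∑ y, ∑ z', ((starRingEnd ℂ) (V x a) * τ (x, y) z' * V z'.1 a)
                * (if y = z'.2 then 1 else 0)
              = ∑ y, ∑ x', (starRingEnd ℂ) (V x a) * τ (x, y) (x', y) * V x' a := by
                refine Finset.sum_congr rfl fun y _ => ?_
                rw [Fintype.sum_prod_type]
                refine Finset.sum_congr rfl fun x' _ => ?_
                simp [mul_ite, mul_one, mul_zero, Finset.sum_ite_eq]
            _ = ∑ x', ∑ y, (starRingEnd ℂ) (V x a) * τ (x, y) (x', y) * V x' a :=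
                Finset.sum_comm
            _ = ∑ x', (starRingEnd ℂ) (V x a) * A1 x x' * V x' a := by
                refine Finset.sum_congr rfl fun x' _ => ?_
                have hA1e : A1 x x' = ∑ y, τ (x, y) (x', y) := rfl
                rw [hA1e, Finset.mul_sum, Finset.sum_mul]
      _ = ((p a : ℝ) : ℂ) := by
          have h := diag_entry hA1.1 a
          rw [← hVdef, ← hpdef] at h
          exact h
  -- marginal B
  have hm2 : ∀ b, ∑ a, ∑ z, ∑ z', (starRingEnd ℂ) (wv (a, b) z) * τ z z' * wv (a, b) z'
      = ((q b : ℝ) : ℂ) := by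
    intro b
    calc ∑ a, ∑ z, ∑ z', (starRingEnd ℂ) (wv (a, b) z) * τ z z' * wv (a, b) z'
        = ∑ z, ∑ z', ∑ a, (starRingEnd ℂ) (wv (a, b) z) * τ z z' * wv (a, b) z' :=
          (sum_swap3 _).symm
      _ = ∑ z, ∑ z', ((starRingEnd ℂ) (W z.2 b) * τ z z' * W z'.2 b)
            * ∑ a, (starRingEnd ℂ) (V z.1 a) * V z'.1 a := by
          refine Finset.sum_congr rfl fun z _ => Finset.sum_congr rfl fun z' _ => ?_
          rw [Finset.mul_sum]
          refine Finset.sum_congr rfl fun a _ => ?_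
          simp only [hwvdef, _root_.map_mul]
          ring
      _ = ∑ z, ∑ z', ((starRingEnd ℂ) (W z.2 b) * τ z z' * W z'.2 b)
            * (if z.1 = z'.1 then 1 else 0) := by
          refine Finset.sum_congr rfl fun z _ => Finset.sum_congr rfl fun z' _ => ?_
          rw [hVrow z.1 z'.1]
      _ = ∑ y, ∑ y', (starRingEnd ℂ) (W y b) * B1 y y' * W y' b := by
          rw [Fintype.sum_prod_type_right]
          refine Finset.sum_congr rfl fun y _ => ?_
          calc ∑ x, ∑ z', ((starRingEnd ℂ) (W y b) * τ (x, y) z' * W z'.2 b)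
                * (if x = z'.1 then 1 else 0)
              = ∑ x, ∑ y', (starRingEnd ℂ) (W y b) * τ (x, y) (x, y') * W y' b := by
                refine Finset.sum_congr rfl fun x _ => ?_
                rw [Fintype.sum_prod_type_right]
                refine Finset.sum_congr rfl fun y' _ => ?_
                simp [mul_ite, mul_one, mul_zero, Finset.sum_ite_eq]
            _ = ∑ y', ∑ x, (starRingEnd ℂ) (W y b) * τ (x, y) (x, y') * W y' b :=
                Finset.sum_comm
            _ = ∑ y', (starRingEnd ℂ) (W y b) * B1 y y' * W y' b := by
                refine Finset.sum_congr rfl fun y' _ => ?_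
                have hB1e : B1 y y' = ∑ x, τ (x, y) (x, y') := rfl
                rw [hB1e, Finset.mul_sum, Finset.sum_mul]
      _ = ((q b : ℝ) : ℂ) := by
          have h := diag_entry hB1.1 b
          rw [← hWdef, ← hqdef] at h
          exact h
  -- real facts
  have hlam0 : ∀ i, 0 ≤ lam i := hτ.eigenvalues_nonneg
  have hp0 : ∀ a, 0 ≤ p a := hA1.eigenvalues_nonneg
  have hq0 : ∀ b, 0 ≤ q b := hB1.eigenvalues_nonneg
  have hc0 : ∀ j i, 0 ≤ c j i := fun j i => Complex.normSq_nonneg _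
  have htrA : A1.trace = 1 := by
    rw [← htr]
    show ∑ x, A1 x x = ∑ z, τ z z
    rw [Fintype.sum_prod_type]
    rfl
  have htrB : B1.trace = 1 := by
    rw [← htr]
    show ∑ y, B1 y y = ∑ z, τ z z
    rw [Fintype.sum_prod_type]
    rw [Finset.sum_comm]
    rfl
  have hp1 : ∑ a, p a = 1 := sum_eigenvalues_eq_one hA1.1 htrA
  have hq1 : ∑ b, q b = 1 := sum_eigenvalues_eq_one hB1.1 htrB
  have hrp : ∀ a, ∑ b, ∑ i, lam i * c (a, b) i = p a := by
    intro a
    have hC : ∑ b, ∑ i, (((lam i * c (a, b) i : ℝ)) : ℂ) = ((p a : ℝ) : ℂ) := by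
      calc ∑ b, ∑ i, (((lam i * c (a, b) i : ℝ)) : ℂ)
          = ∑ b, ∑ i, ((lam i : ℝ) : ℂ) * ((c (a, b) i : ℝ) : ℂ) := by push_cast; rfl
        _ = ∑ b, ∑ z, ∑ z', (starRingEnd ℂ) (wv (a, b) z) * τ z z' * wv (a, b) z' :=
            Finset.sum_congr rfl fun b _ => (hrC (a, b)).symm
        _ = ((p a : ℝ) : ℂ) := hm1 a
    exact_mod_cast hC
  have hrq : ∀ b, ∑ a, ∑ i, lam i * c (a, b) i = q b := by
    intro b
    have hC : ∑ a, ∑ i, (((lam i * c (a, b) i : ℝ)) : ℂ) = ((q b : ℝ) : ℂ) := by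
      calc ∑ a, ∑ i, (((lam i * c (a, b) i : ℝ)) : ℂ)
          = ∑ a, ∑ i, ((lam i : ℝ) : ℂ) * ((c (a, b) i : ℝ) : ℂ) := by push_cast; rfl
        _ = ∑ a, ∑ z, ∑ z', (starRingEnd ℂ) (wv (a, b) z) * τ z z' * wv (a, b) z' :=
            Finset.sum_congr rfl fun a _ => (hrC (a, b)).symm
        _ = ((q b : ℝ) : ℂ) := hm2 b
    exact_mod_cast hC
  have hc1r : ∀ a b, ∑ i, c (a, b) i = 1 := fun a b => by exact_mod_cast hdd (a, b)
  have hc2r : ∀ i, ∑ a, ∑ b, c (a, b) i = 1 := by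
    intro i
    have h := hcc i
    rw [Fintype.sum_prod_type] at h
    exact_mod_cast h
  have eT : vnEntropy τ = ∑ i, negxlogx (lam i) := by rw [vnEntropy, dif_pos hH]
  have eA : vnEntropy A1 = ∑ a, negxlogx (p a) := by rw [vnEntropy, dif_pos hA1.1]
  have eB : vnEntropy B1 = ∑ b, negxlogx (q b) := by rw [vnEntropy, dif_pos hB1.1]
  rw [eT, eA, eB]
  exact klein_sum lam p q (fun a b i => c (a, b) i) hlam0 hp0 hq0 (fun a b i => hc0 _ _)
    hc1r hc2r hrp hrq hp1 hq1

end SubaddMain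

end EntropyAux

/-- Entropy sandwich: for a pure global state with `S(A_t) = s + (t−1)log 2`,
`S(A') = (|A|−t)log 2`, `S(B) = (2t−1−|A|)log 2` and `S(R) = s`, one gets
`S(A) = s + (2t−1−|A|)log 2`. -/
theorem stmt10 {r at' a' b : Type*} [Fintype r] [Fintype at'] [Fintype a'] [Fintype b]
    [DecidableEq r] [DecidableEq at'] [DecidableEq a'] [DecidableEq b]
    (ρ : Matrix (r × (at' × a') × b) (r × (at' × a') × b) ℂ)
    (hpsd : ρ.PosSemidef) (htr : ρ.trace = 1)
    (ψ : r × (at' × a') × b → ℂ) (hpure : ρ = Matrix.of fun x y => ψ x * star (ψ y))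
    (s : ℝ) (t nA : ℕ) (ht : t ≤ nA) (hs : 0 ≤ s)
    (hA : (nA : ℝ) - t ≤ (t : ℝ) - 1)
    (h1 : vnEntropy (redAt ρ) = s + ((t : ℝ) - 1) * Real.log 2)
    (h2 : vnEntropy (redA' ρ) = ((nA : ℝ) - t) * Real.log 2)
    (h3 : vnEntropy (redB ρ) = (2 * (t : ℝ) - 1 - nA) * Real.log 2)
    (h4 : vnEntropy (redR ρ) = s) :
    vnEntropy (redA ρ) = s + (2 * (t : ℝ) - 1 - nA) * Real.log 2 := by
  classical
  have hρ : ∀ x y, ρ x y = ψ x * (starRingEnd ℂ) (ψ y) := by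
    intro x y
    rw [hpure]
    rfl
  have htrρ : ρ.trace = ∑ z : r × (at' × a') × b, ρ z z := rfl
  -- φ1 : A ↔ (R × B)
  set φ1 : (at' × a') → (r × b) → ℂ := fun i x => ψ (x.1, i, x.2) with hφ1
  have E1 : redA ρ = Matrix.of fun i j => ∑ x : r × b, φ1 i x * (starRingEnd ℂ) (φ1 j x) := by
    ext i j
    show ∑ k : r, ∑ l : b, ρ (k, i, l) (k, j, l) = ∑ x : r × b, _
    rw [Fintype.sum_prod_type]
    exact Finset.sum_congr rfl fun k _ => Finset.sum_congr rfl fun l _ => hρ _ _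
  have E2 : redRB ρ = Matrix.of fun x y : r × b => ∑ i : at' × a',
      φ1 i x * (starRingEnd ℂ) (φ1 i y) := by
    ext x y
    show ∑ p : at' × a', ρ (x.1, p, x.2) (y.1, p, y.2) = _
    exact Finset.sum_congr rfl fun p _ => hρ _ _
  have stepA : vnEntropy (redA ρ) = vnEntropy (redRB ρ) := by
    rw [E1, E2]
    exact vnEntropy_gram_comm φ1
  -- redRB properties
  have hRBpsd : (redRB ρ).PosSemidef := by
    rw [E2]
    exact gram_posSemidef (fun x i => φ1 i x)
  have hRBtr : (redRB ρ).trace = 1 := by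
    rw [← htr, htrρ]
    show ∑ x : r × b, ∑ p : at' × a', ρ (x.1, p, x.2) (x.1, p, x.2) = _
    let e : ((r × b) × (at' × a')) ≃ (r × (at' × a') × b) :=
      ⟨fun w => (w.1.1, w.2, w.1.2), fun z => ((z.1, z.2.2), z.2.1),
       fun ⟨⟨k, l⟩, p⟩ => rfl, fun ⟨k, p, l⟩ => rfl⟩
    calc ∑ x : r × b, ∑ p : at' × a', ρ (x.1, p, x.2) (x.1, p, x.2)
        = ∑ w : (r × b) × (at' × a'),
            ρ (w.1.1, w.2, w.1.2) (w.1.1, w.2, w.1.2) :=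
          (Fintype.sum_prod_type (fun w : (r × b) × (at' × a') =>
            ρ (w.1.1, w.2, w.1.2) (w.1.1, w.2, w.1.2))).symm
      _ = ∑ z : r × (at' × a') × b, ρ z z := Equiv.sum_comp e (fun z => ρ z z)
  -- marginals of redRB
  have E3 : (Matrix.of fun k k' : r => ∑ l : b, redRB ρ (k, l) (k', l)) = redR ρ := by
    ext k k'
    show ∑ l : b, ∑ p : at' × a', ρ (k, p, l) (k', p, l)
      = ∑ q : (at' × a') × b, ρ (k, q) (k', q)
    let e : (b × (at' × a')) ≃ ((at' × a') × b) := Equiv.prodComm _ _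
    calc ∑ l : b, ∑ p : at' × a', ρ (k, p, l) (k', p, l)
        = ∑ w : b × (at' × a'), ρ (k, w.2, w.1) (k', w.2, w.1) :=
          (Fintype.sum_prod_type (fun w : b × (at' × a') =>
            ρ (k, w.2, w.1) (k', w.2, w.1))).symm
      _ = ∑ q : (at' × a') × b, ρ (k, q) (k', q) :=
          Equiv.sum_comp e (fun q => ρ (k, q) (k', q))
  have E4 : (Matrix.of fun l l' : b => ∑ k : r, redRB ρ (k, l) (k, l')) = redB ρ := by
    ext l l'
    rfl
  have stepB : vnEntropy (redRB ρ) ≤ vnEntropy (redR ρ) + vnEntropy (redB ρ) := by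
    have h := subadditivity (redRB ρ) hRBpsd hRBtr
    rw [E3, E4] at h
    exact h
  -- the A_t side : gram matrix on a' × (r × b)
  set φ3 : (a' × (r × b)) → at' → ℂ := fun u i => ψ (u.2.1, (i, u.1), u.2.2) with hφ3
  set τ : Matrix (a' × (r × b)) (a' × (r × b)) ℂ :=
    Matrix.of fun u v => ∑ i : at', φ3 u i * (starRingEnd ℂ) (φ3 v i) with hτdef
  have hτpsd : τ.PosSemidef := gram_posSemidef φ3
  have hτtr : τ.trace = 1 := by
    rw [← htr, htrρ]
    show ∑ u : a' × (r × b), ∑ i : at', ψ (u.2.1, (i, u.1), u.2.2)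
        * (starRingEnd ℂ) (ψ (u.2.1, (i, u.1), u.2.2)) = _
    let e : ((a' × (r × b)) × at') ≃ (r × (at' × a') × b) :=
      ⟨fun w => (w.1.2.1, (w.2, w.1.1), w.1.2.2),
       fun z => ((z.2.1.2, (z.1, z.2.2)), z.2.1.1),
       fun ⟨⟨P, k, l⟩, i⟩ => rfl, fun ⟨k, ⟨i, P⟩, l⟩ => rfl⟩
    calc ∑ u : a' × (r × b), ∑ i : at', ψ (u.2.1, (i, u.1), u.2.2)
          * (starRingEnd ℂ) (ψ (u.2.1, (i, u.1), u.2.2))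
        = ∑ w : (a' × (r × b)) × at', ψ (w.1.2.1, (w.2, w.1.1), w.1.2.2)
            * (starRingEnd ℂ) (ψ (w.1.2.1, (w.2, w.1.1), w.1.2.2)) :=
          (Fintype.sum_prod_type (fun w : (a' × (r × b)) × at' =>
            ψ (w.1.2.1, (w.2, w.1.1), w.1.2.2)
            * (starRingEnd ℂ) (ψ (w.1.2.1, (w.2, w.1.1), w.1.2.2)))).symm
      _ = ∑ z : r × (at' × a') × b, ψ z * (starRingEnd ℂ) (ψ z) :=
          Equiv.sum_comp e (fun z => ψ z * (starRingEnd ℂ) (ψ z))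
      _ = ∑ z : r × (at' × a') × b, ρ z z :=
          Finset.sum_congr rfl fun z _ => (hρ z z).symm
  have E7 : vnEntropy τ = vnEntropy (redAt ρ) := by
    have h := vnEntropy_gram_comm φ3
    rw [← hτdef] at h
    rw [h]
    congr 1
    ext x y
    show ∑ u : a' × (r × b), φ3 u x * (starRingEnd ℂ) (φ3 u y)
      = ∑ k : r, ∑ p : a', ∑ l : b, ρ (k, (x, p), l) (k, (y, p), l)
    let e : (a' × (r × b)) ≃ (r × a' × b) :=
      ⟨fun u => (u.2.1, u.1, u.2.2), fun v => (v.2.1, (v.1, v.2.2)),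
       fun ⟨P, k, l⟩ => rfl, fun ⟨k, P, l⟩ => rfl⟩
    calc ∑ u : a' × (r × b), φ3 u x * (starRingEnd ℂ) (φ3 u y)
        = ∑ v : r × a' × b, ψ (v.1, (x, v.2.1), v.2.2)
            * (starRingEnd ℂ) (ψ (v.1, (y, v.2.1), v.2.2)) :=
          Equiv.sum_comp e (fun v => ψ (v.1, (x, v.2.1), v.2.2)
            * (starRingEnd ℂ) (ψ (v.1, (y, v.2.1), v.2.2)))
      _ = ∑ k : r, ∑ v : a' × b, ψ (k, (x, v.1), v.2)
            * (starRingEnd ℂ) (ψ (k, (y, v.1), v.2)) :=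
          Fintype.sum_prod_type (fun v : r × a' × b => ψ (v.1, (x, v.2.1), v.2.2)
            * (starRingEnd ℂ) (ψ (v.1, (y, v.2.1), v.2.2)))
      _ = ∑ k : r, ∑ p : a', ∑ l : b, ρ (k, (x, p), l) (k, (y, p), l) := by
          refine Finset.sum_congr rfl fun k _ => ?_
          rw [Fintype.sum_prod_type]
          exact Finset.sum_congr rfl fun P _ => Finset.sum_congr rfl fun l _ => (hρ _ _).symm
  have E8 : (Matrix.of fun P P' : a' => ∑ w : r × b, τ (P, w) (P', w)) = redA' ρ := by
    ext P P'
    show ∑ w : r × b, ∑ i : at', ψ (w.1, (i, P), w.2) * (starRingEnd ℂ) (ψ (w.1, (i, P'), w.2))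
      = ∑ k : r, ∑ p : at', ∑ l : b, ρ (k, (p, P), l) (k, (p, P'), l)
    let e : ((r × b) × at') ≃ (r × at' × b) :=
      ⟨fun w => (w.1.1, w.2, w.1.2), fun v => ((v.1, v.2.2), v.2.1),
       fun ⟨⟨k, l⟩, i⟩ => rfl, fun ⟨k, i, l⟩ => rfl⟩
    calc ∑ w : r × b, ∑ i : at', ψ (w.1, (i, P), w.2) * (starRingEnd ℂ) (ψ (w.1, (i, P'), w.2))
        = ∑ w : (r × b) × at', ψ (w.1.1, (w.2, P), w.1.2)
            * (starRingEnd ℂ) (ψ (w.1.1, (w.2, P'), w.1.2)) :=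
          (Fintype.sum_prod_type (fun w : (r × b) × at' => ψ (w.1.1, (w.2, P), w.1.2)
            * (starRingEnd ℂ) (ψ (w.1.1, (w.2, P'), w.1.2)))).symm
      _ = ∑ v : r × at' × b, ψ (v.1, (v.2.1, P), v.2.2)
            * (starRingEnd ℂ) (ψ (v.1, (v.2.1, P'), v.2.2)) :=
          Equiv.sum_comp e (fun v => ψ (v.1, (v.2.1, P), v.2.2)
            * (starRingEnd ℂ) (ψ (v.1, (v.2.1, P'), v.2.2)))
      _ = ∑ k : r, ∑ v : at' × b, ψ (k, (v.1, P), v.2)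
            * (starRingEnd ℂ) (ψ (k, (v.1, P'), v.2)) :=
          Fintype.sum_prod_type (fun v : r × at' × b => ψ (v.1, (v.2.1, P), v.2.2)
            * (starRingEnd ℂ) (ψ (v.1, (v.2.1, P'), v.2.2)))
      _ = ∑ k : r, ∑ p : at', ∑ l : b, ρ (k, (p, P), l) (k, (p, P'), l) := by
          refine Finset.sum_congr rfl fun k _ => ?_
          rw [Fintype.sum_prod_type]
          exact Finset.sum_congr rfl fun p _ => Finset.sum_congr rfl fun l _ => (hρ _ _).symm
  have E9 : (Matrix.of fun w w' : r × b => ∑ P : a', τ (P, w) (P, w')) = redRB ρ := by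
    ext w w'
    show ∑ P : a', ∑ i : at', ψ (w.1, (i, P), w.2) * (starRingEnd ℂ) (ψ (w'.1, (i, P), w'.2))
      = ∑ p : at' × a', ρ (w.1, p, w.2) (w'.1, p, w'.2)
    let e : (a' × at') ≃ (at' × a') := Equiv.prodComm _ _
    calc ∑ P : a', ∑ i : at', ψ (w.1, (i, P), w.2) * (starRingEnd ℂ) (ψ (w'.1, (i, P), w'.2))
        = ∑ u : a' × at', ψ (w.1, (u.2, u.1), w.2)
            * (starRingEnd ℂ) (ψ (w'.1, (u.2, u.1), w'.2)) :=
          (Fintype.sum_prod_type (fun u : a' × at' => ψ (w.1, (u.2, u.1), w.2)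
            * (starRingEnd ℂ) (ψ (w'.1, (u.2, u.1), w'.2)))).symm
      _ = ∑ p : at' × a', ψ (w.1, p, w.2) * (starRingEnd ℂ) (ψ (w'.1, p, w'.2)) :=
          Equiv.sum_comp e (fun p => ψ (w.1, p, w.2) * (starRingEnd ℂ) (ψ (w'.1, p, w'.2)))
      _ = ∑ p : at' × a', ρ (w.1, p, w.2) (w'.1, p, w'.2) :=
          Finset.sum_congr rfl fun p _ => (hρ _ _).symm
  have stepC : vnEntropy (redAt ρ) ≤ vnEntropy (redA' ρ) + vnEntropy (redRB ρ) := by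
    have h := subadditivity τ hτpsd hτtr
    rw [E8, E9, E7] at h
    exact h
  -- final arithmetic
  rw [stepA]
  rw [h1, h2] at stepC
  rw [h3, h4] at stepB
  have hring : ((t : ℝ) - 1) * Real.log 2 - ((nA : ℝ) - t) * Real.log 2
      = (2 * (t : ℝ) - 1 - nA) * Real.log 2 := by ring
  linarith
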